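/- arXiv:math/0111283 — 6 statements merged into one kernel-verified Lean document; each statement's English description precedes it below -/
import Mathlib

section
/- Let G be a periodic group generated by two proper subgroups H and K, and let X be the graph with vertex set G/H ⊔ G/K and edges g(H∩K) joining gH to gK. Then the subgraph obtained from X by deleting the two vertices H (the trivial coset in G/H) and K (the trivial coset in G/K), together with all their incident edges, is connected. -/
namespace Stmt2Aux

open SimpleGraph Sum

variable {G : Type*} [Group G] (H K : Subgroup G)

private def XG : SimpleGraph ((G ⧸ H) ⊕ (G ⧸ K)) :=
  SimpleGraph.fromRel (fun a b => ∃ g : G, a = Sum.inl (QuotientGroup.mk g) ∧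
    b = Sum.inr (QuotientGroup.mk g))

private def sD : Set ((G ⧸ H) ⊕ (G ⧸ K)) :=
  {v | v ≠ Sum.inl (QuotientGroup.mk (1:G)) ∧ v ≠ Sum.inr (QuotientGroup.mk (1:G))}

private def Rch (u v : (G ⧸ H) ⊕ (G ⧸ K)) : Prop :=
  ∃ (hu : u ∈ sD H K) (hv : v ∈ sD H K),
    ((XG H K).induce (sD H K)).Reachable ⟨u, hu⟩ ⟨v, hv⟩

private lemma mkH_eq_one_iff {g : G} : (QuotientGroup.mk g : G ⧸ H) = QuotientGroup.mk 1 ↔ g ∈ H := by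
  rw [QuotientGroup.eq]; simp

private lemma mkK_eq_one_iff {g : G} : (QuotientGroup.mk g : G ⧸ K) = QuotientGroup.mk 1 ↔ g ∈ K := by
  rw [QuotientGroup.eq]; simp

private lemma inl_mem_sD {g : G} (hg : g ∉ H) :
    (Sum.inl (QuotientGroup.mk g) : (G ⧸ H) ⊕ (G ⧸ K)) ∈ sD H K :=
  ⟨fun e => hg ((mkH_eq_one_iff H).1 (Sum.inl.inj e)), fun e => Sum.inl_ne_inr e⟩

private lemma inr_mem_sD {g : G} (hg : g ∉ K) :
    (Sum.inr (QuotientGroup.mk g) : (G ⧸ H) ⊕ (G ⧸ K)) ∈ sD H K :=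
  ⟨fun e => Sum.inr_ne_inl e, fun e => hg ((mkK_eq_one_iff K).1 (Sum.inr.inj e))⟩

private lemma notH_of_inl_mem {g : G}
    (h : (Sum.inl (QuotientGroup.mk g) : (G ⧸ H) ⊕ (G ⧸ K)) ∈ sD H K) : g ∉ H :=
  fun hg => h.1 (congrArg Sum.inl ((mkH_eq_one_iff H).2 hg))

private lemma notK_of_inr_mem {g : G}
    (h : (Sum.inr (QuotientGroup.mk g) : (G ⧸ H) ⊕ (G ⧸ K)) ∈ sD H K) : g ∉ K :=
  fun hg => h.2 (congrArg Sum.inr ((mkK_eq_one_iff K).2 hg))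

private lemma adjX (g : G) :
    (XG H K).Adj (Sum.inl (QuotientGroup.mk g)) (Sum.inr (QuotientGroup.mk g)) :=
  ⟨fun e => Sum.inl_ne_inr e, Or.inl ⟨g, rfl, rfl⟩⟩

private lemma adjΓ {u v : (G ⧸ H) ⊕ (G ⧸ K)} (hu : u ∈ sD H K) (hv : v ∈ sD H K)
    (h : (XG H K).Adj u v) : ((XG H K).induce (sD H K)).Adj ⟨u, hu⟩ ⟨v, hv⟩ := h

private lemma rch_refl {u : (G ⧸ H) ⊕ (G ⧸ K)} (hu : u ∈ sD H K) : Rch H K u u :=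
  ⟨hu, hu, Reachable.refl _⟩

private lemma rch_symm {u v : (G ⧸ H) ⊕ (G ⧸ K)} : Rch H K u v → Rch H K v u :=
  fun ⟨a, b, r⟩ => ⟨b, a, r.symm⟩

private lemma rch_trans {u v w : (G ⧸ H) ⊕ (G ⧸ K)} :
    Rch H K u v → Rch H K v w → Rch H K u w := by
  rintro ⟨a, b, r⟩ ⟨b', c, r'⟩
  exact ⟨a, c, r.trans r'⟩

private lemma rch_edge {g : G} (h1 : g ∉ H) (h2 : g ∉ K) :
    Rch H K (Sum.inl (QuotientGroup.mk g)) (Sum.inr (QuotientGroup.mk g)) :=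
  ⟨inl_mem_sD H K h1, inr_mem_sD H K h2,
    (adjΓ H K (inl_mem_sD H K h1) (inr_mem_sD H K h2) (adjX H K g)).reachable⟩

private lemma tau_adj (z : G) {u v : (G ⧸ H) ⊕ (G ⧸ K)} (h : (XG H K).Adj u v) :
    (XG H K).Adj (Sum.map (z • ·) (z • ·) u) (Sum.map (z • ·) (z • ·) v) := by
  obtain ⟨hne, hr⟩ := h
  constructor
  · intro e
    apply hne
    have hinj : Function.Injective (Sum.map ((z • ·) : G ⧸ H → G ⧸ H) ((z • ·) : G ⧸ K → G ⧸ K)) :=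
      (MulAction.injective z).sumMap (MulAction.injective z)
    exact hinj e
  · rcases hr with ⟨g, rfl, rfl⟩ | ⟨g, rfl, rfl⟩
    · exact Or.inl ⟨z * g, rfl, rfl⟩
    · exact Or.inr ⟨z * g, rfl, rfl⟩

/-- The main lemma: the vertices `hK` and `k⁻¹H` are connected in the punctured graph. -/
private lemma main {h k : G} (hper : ∀ g : G, IsOfFinOrder g)
    (hh : h ∈ H) (hhK : h ∉ K) (hk : k ∈ K) (hkH : k ∉ H) :
    Rch H K (Sum.inr (QuotientGroup.mk h)) (Sum.inl (QuotientGroup.mk k⁻¹)) := by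
  by_contra hcon
  set z := h * k with hzdef
  have hzH : z ∉ H := fun m => hkH (by
    have : h⁻¹ * z ∈ H := H.mul_mem (H.inv_mem hh) m
    simpa [hzdef, mul_assoc] using this)
  have hzK : z ∉ K := fun m => hhK (by
    have : z * k⁻¹ ∈ K := K.mul_mem m (K.inv_mem hk)
    simpa [hzdef, mul_assoc] using this)
  have hzH' : z⁻¹ ∉ H := fun m => hzH (by simpa using H.inv_mem m)
  have hzK' : z⁻¹ ∉ K := fun m => hzK (by simpa using K.inv_mem m)
  have eK : (QuotientGroup.mk z : G ⧸ K) = QuotientGroup.mk h := by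
    rw [hzdef]; exact QuotientGroup.mk_mul_of_mem h hk
  have eH : (QuotientGroup.mk z⁻¹ : G ⧸ H) = QuotientGroup.mk k⁻¹ := by
    rw [hzdef, mul_inv_rev]; exact QuotientGroup.mk_mul_of_mem k⁻¹ (H.inv_mem hh)
  set a₀ : (G ⧸ H) ⊕ (G ⧸ K) := Sum.inr (QuotientGroup.mk h) with ha₀
  have ha₀mem : a₀ ∈ sD H K := inr_mem_sD H K hhK
  -- the two vertices of the `z⁻¹`-cut are not reachable from `a₀`
  have hb : ¬ Rch H K a₀ (Sum.inl (QuotientGroup.mk z⁻¹)) := by rw [eH]; exact hcon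
  have hbK : ¬ Rch H K a₀ (Sum.inr (QuotientGroup.mk z⁻¹)) := fun r =>
    hb (rch_trans H K r (rch_symm H K (rch_edge H K hzH' hzK')))
  -- translation by z of any vertex reachable from a₀ is live
  have live : ∀ v : (G ⧸ H) ⊕ (G ⧸ K), Rch H K a₀ v →
      (Sum.map ((z • ·) : G ⧸ H → G ⧸ H) ((z • ·) : G ⧸ K → G ⧸ K) v) ∈ sD H K := by
    intro v hv
    cases v with
    | inl q =>
      refine ⟨fun e => ?_, fun e => Sum.inl_ne_inr e⟩
      simp only [Sum.map_inl] at e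
      have e' : z • q = QuotientGroup.mk (1:G) := Sum.inl.inj e
      have hq : q = QuotientGroup.mk z⁻¹ := by
        have : z⁻¹ • (z • q) = z⁻¹ • (QuotientGroup.mk (1:G) : G ⧸ H) := by rw [e']
        simpa [smul_smul] using this
      exact hb (hq ▸ hv)
    | inr q =>
      refine ⟨fun e => Sum.inr_ne_inl e, fun e => ?_⟩
      simp only [Sum.map_inr] at e
      have e' : z • q = QuotientGroup.mk (1:G) := Sum.inr.inj e
      have hq : q = QuotientGroup.mk z⁻¹ := by
        have : z⁻¹ • (z • q) = z⁻¹ • (QuotientGroup.mk (1:G) : G ⧸ K) := by rw [e']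
        simpa [smul_smul] using this
      exact hbK (hq ▸ hv)
  -- push walks forward under translation by z
  have push : ∀ (a b : (sD H K : Set _)) (p : ((XG H K).induce (sD H K)).Walk a b),
      Rch H K a₀ ↑a →
      Rch H K (Sum.map ((z • ·) : G ⧸ H → G ⧸ H) ((z • ·) : G ⧸ K → G ⧸ K) ↑a)
        (Sum.map ((z • ·) : G ⧸ H → G ⧸ H) ((z • ·) : G ⧸ K → G ⧸ K) ↑b) := by
    intro a b p
    induction p with
    | nil => exact fun ha => rch_refl H K (live _ ha)
    | @cons x y w hadj p ih =>
      intro hx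
      have hadj' : (XG H K).Adj (↑x) (↑y) := hadj
      have hxy : Rch H K ↑x ↑y := ⟨x.2, y.2, hadj.reachable⟩
      have hy : Rch H K a₀ ↑y := rch_trans H K hx hxy
      have step : Rch H K (Sum.map ((z • ·) : G ⧸ H → G ⧸ H) ((z • ·) : G ⧸ K → G ⧸ K) ↑x)
          (Sum.map ((z • ·) : G ⧸ H → G ⧸ H) ((z • ·) : G ⧸ K → G ⧸ K) ↑y) :=
        ⟨live _ hx, live _ hy, (adjΓ H K (live _ hx) (live _ hy) (tau_adj H K z hadj')).reachable⟩
      exact rch_trans H K step (ih hy)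
  -- basic reachabilities
  have Rz : Rch H K a₀ (Sum.inr (QuotientGroup.mk z)) := by
    rw [eK]; exact rch_refl H K ha₀mem
  have RzH : Rch H K a₀ (Sum.inl (QuotientGroup.mk z)) :=
    rch_trans H K Rz (rch_symm H K (rch_edge H K hzH hzK))
  -- τ a₀ = inr (mk (z*h)) is reachable from a₀
  have hzhH : z * h ∉ H := fun m => hzH (by
    have : (z * h) * h⁻¹ ∈ H := H.mul_mem m (H.inv_mem hh)
    simpa [mul_assoc] using this)
  have ta₀mem : (Sum.inr (QuotientGroup.mk (z * h)) : (G ⧸ H) ⊕ (G ⧸ K)) ∈ sD H K := by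
    have := live a₀ (rch_refl H K ha₀mem)
    simpa [ha₀, MulAction.Quotient.smul_mk] using this
  have hzhK : z * h ∉ K := notK_of_inr_mem H K ta₀mem
  have eH2 : (QuotientGroup.mk (z * h) : G ⧸ H) = QuotientGroup.mk z :=
    QuotientGroup.mk_mul_of_mem z hh
  have Rta₀ : Rch H K a₀ (Sum.inr (QuotientGroup.mk (z * h))) := by
    refine rch_trans H K RzH ?_
    have := rch_edge H K hzhH hzhK
    rwa [eH2] at this
  -- pushing any reachable vertex
  have maprch : ∀ v : (G ⧸ H) ⊕ (G ⧸ K), Rch H K a₀ v →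
      Rch H K a₀ (Sum.map ((z • ·) : G ⧸ H → G ⧸ H) ((z • ·) : G ⧸ K → G ⧸ K) v) := by
    intro v hv
    obtain ⟨hu, hvm, hr⟩ := hv
    obtain ⟨p⟩ := hr
    have hpush := push ⟨a₀, hu⟩ ⟨v, hvm⟩ p (rch_refl H K hu)
    refine rch_trans H K ?_ hpush
    simpa [ha₀, MulAction.Quotient.smul_mk] using Rta₀
  -- iterate
  have key : ∀ i : ℕ, Rch H K a₀ (Sum.inl (QuotientGroup.mk (z ^ (i + 1)))) := by
    intro i
    induction i with
    | zero => simpa [pow_one] using RzH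
    | succ n ihn =>
      have := maprch _ ihn
      have epow : z * z ^ (n + 1) = z ^ (n + 2) := (pow_succ' z (n + 1)).symm
      simpa [MulAction.Quotient.smul_mk, epow] using this
  have hord : 0 < orderOf z := (hper z).orderOf_pos
  have h1 := key (orderOf z - 1)
  rw [Nat.sub_add_cancel hord, pow_orderOf_eq_one] at h1
  obtain ⟨_, hmem, _⟩ := h1
  exact hmem.1 rfl

end Stmt2Aux

/-- Let `G` be a periodic group generated by two proper subgroups `H` and `K`, and
let `X` be the graph with vertices `G/H ⊕ G/K` and an edge joining `gH` to `gK`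
for each `g ∈ G`.  Deleting the two vertices `H` (the trivial coset in `G/H`) and
`K` (the trivial coset in `G/K`), together with all incident edges, leaves a
connected graph. -/
theorem stmt2 (G : Type*) [Group G] (hper : ∀ g : G, IsOfFinOrder g)
    (H K : Subgroup G) (hH : H ≠ ⊤) (hK : K ≠ ⊤) (hgen : H ⊔ K = ⊤) :
    ((SimpleGraph.fromRel (fun a b : (G ⧸ H) ⊕ (G ⧸ K) =>
      ∃ g : G, a = Sum.inl (QuotientGroup.mk g) ∧
        b = Sum.inr (QuotientGroup.mk g))).induce
      {v | v ≠ Sum.inl (QuotientGroup.mk (1 : G)) ∧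
           v ≠ Sum.inr (QuotientGroup.mk (1 : G))}).Connected := by
  classical
  open Stmt2Aux in
  show ((XG H K).induce (sD H K)).Connected
  -- witnesses in H \ K and K \ H
  obtain ⟨h₀, hh₀, hh₀K⟩ : ∃ h, h ∈ H ∧ h ∉ K := by
    by_contra hc
    push_neg at hc
    have hle : H ≤ K := fun x hx => hc x hx
    exact hK (by rw [← hgen, sup_eq_right.mpr hle])
  obtain ⟨k₀, hk₀, hk₀H⟩ : ∃ k, k ∈ K ∧ k ∉ H := by
    by_contra hc
    push_neg at hc
    have hle : K ≤ H := fun x hx => hc x hx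
    exact hH (by rw [← hgen, sup_eq_left.mpr hle])
  -- main lemma in the convenient form : hK ≈ kH
  have main' : ∀ {h k : G}, h ∈ H → h ∉ K → k ∈ K → k ∉ H →
      Rch H K (Sum.inr (QuotientGroup.mk h)) (Sum.inl (QuotientGroup.mk k)) := by
    intro h k hh hhK hk hkH
    have := main H K hper hh hhK (K.inv_mem hk) (fun m => hkH (by simpa using H.inv_mem m))
    simpa using this
  set v₀ : (G ⧸ H) ⊕ (G ⧸ K) := Sum.inr (QuotientGroup.mk h₀) with hv₀
  have hv₀mem : v₀ ∈ sD H K := inr_mem_sD H K hh₀K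
  have connH : ∀ {h : G}, h ∈ H → h ∉ K → Rch H K (Sum.inr (QuotientGroup.mk h)) v₀ := by
    intro h hh hhK
    exact rch_trans H K (main' hh hhK hk₀ hk₀H) (rch_symm H K (main' hh₀ hh₀K hk₀ hk₀H))
  have connK : ∀ {k : G}, k ∈ K → k ∉ H → Rch H K (Sum.inl (QuotientGroup.mk k)) v₀ := by
    intro k hk hkH
    exact rch_symm H K (main' hh₀ hh₀K hk hkH)
  -- the property `ok`
  let ok : G → Prop := fun g =>
    (g ∉ H → Rch H K (Sum.inl (QuotientGroup.mk g)) v₀) ∧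
    (g ∉ K → Rch H K (Sum.inr (QuotientGroup.mk g)) v₀)
  have ok1 : ok 1 := ⟨fun c => absurd H.one_mem c, fun c => absurd K.one_mem c⟩
  have okH : ∀ x ∈ H, ∀ y, ok y → ok (y * x) := by
    intro x hx y hy
    have eH : (QuotientGroup.mk (y * x) : G ⧸ H) = QuotientGroup.mk y :=
      QuotientGroup.mk_mul_of_mem y hx
    constructor
    · intro hyx
      have hyH : y ∉ H := fun m => hyx (H.mul_mem m hx)
      rw [eH]; exact hy.1 hyH
    · intro hyxK
      by_cases hyH : y ∈ H
      · exact connH (H.mul_mem hyH hx) hyxK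
      · have hyxH : y * x ∉ H := fun m => hyH (by
          have : (y * x) * x⁻¹ ∈ H := H.mul_mem m (H.inv_mem hx)
          simpa [mul_assoc] using this)
        refine rch_trans H K (rch_symm H K (rch_edge H K hyxH hyxK)) ?_
        rw [eH]; exact hy.1 hyH
  have okK : ∀ x ∈ K, ∀ y, ok y → ok (y * x) := by
    intro x hx y hy
    have eK : (QuotientGroup.mk (y * x) : G ⧸ K) = QuotientGroup.mk y :=
      QuotientGroup.mk_mul_of_mem y hx
    constructor
    · intro hyxH
      by_cases hyK : y ∈ K
      · exact connK (K.mul_mem hyK hx) hyxH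
      · have hyxK : y * x ∉ K := fun m => hyK (by
          have : (y * x) * x⁻¹ ∈ K := K.mul_mem m (K.inv_mem hx)
          simpa [mul_assoc] using this)
        refine rch_trans H K (rch_edge H K hyxH hyxK) ?_
        rw [eK]; exact hy.2 hyK
    · intro hyx
      have hyK : y ∉ K := fun m => hyx (K.mul_mem m hx)
      rw [eK]; exact hy.2 hyK
  -- subgroup trick to get ok for all g
  let T : Subgroup G :=
    { carrier := {g | ∀ y, ok y → ok (y * g) ∧ ok (y * g⁻¹)}
      one_mem' := by
        intro y hy
        exact ⟨by simpa using hy, by simpa using hy⟩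
      mul_mem' := by
        intro a b ha hb y hy
        constructor
        · have := (hb (y * a) ((ha y hy).1)).1
          rwa [mul_assoc] at this
        · have := (ha (y * b⁻¹) ((hb y hy).2)).2
          rw [mul_inv_rev, ← mul_assoc]
          exact this
      inv_mem' := by
        intro a ha y hy
        refine ⟨(ha y hy).2, ?_⟩
        rw [inv_inv]
        exact (ha y hy).1 }
  have hHT : H ≤ T := fun x hx y hy => ⟨okH x hx y hy, okH x⁻¹ (H.inv_mem hx) y hy⟩
  have hKT : K ≤ T := fun x hx y hy => ⟨okK x hx y hy, okK x⁻¹ (K.inv_mem hx) y hy⟩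
  have okall : ∀ g : G, ok g := by
    intro g
    have hgT : g ∈ T := by
      have : g ∈ H ⊔ K := by rw [hgen]; exact Subgroup.mem_top g
      exact (sup_le hHT hKT) this
    have := (hgT 1 ok1).1
    simpa using this
  -- conclude connectivity
  rw [SimpleGraph.connected_iff]
  have reach : ∀ w : (sD H K : Set _),
      ((XG H K).induce (sD H K)).Reachable w ⟨v₀, hv₀mem⟩ := by
    rintro ⟨w, hw⟩
    cases w with
    | inl q =>
      obtain ⟨g, rfl⟩ : ∃ g : G, QuotientGroup.mk g = q := Quot.exists_rep q
      have hgH : g ∉ H := notH_of_inl_mem H K hw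
      obtain ⟨h1, h2, r⟩ := (okall g).1 hgH
      exact r
    | inr q =>
      obtain ⟨g, rfl⟩ : ∃ g : G, QuotientGroup.mk g = q := Quot.exists_rep q
      have hgK : g ∉ K := notK_of_inr_mem H K hw
      obtain ⟨h1, h2, r⟩ := (okall g).2 hgK
      exact r
  exact ⟨fun u v => (reach u).trans (reach v).symm, ⟨⟨v₀, hv₀mem⟩⟩⟩
end

section
/- Let h ∈ H \ K and k ∈ K \ H in a periodic group G, and let L = ⟨kh⁻¹⟩, a finite cyclic group. Let m and n denote the orders of the L-orbits of the cosets H ∈ G/H and K ∈ G/K, respectively, under left multiplication. If m ≥ n, then writing g = kh⁻¹, the 2n cosets H, K, gH, gK, g²H, g²K, …, gⁿ⁻¹H, gⁿ⁻¹K are pairwise distinct. -/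
open MulAction Function

lemma pow_smul_inj_of_lt_minimalPeriod {G β : Type*} [Group G] [MulAction G β]
    (g : G) (b : β) {i j : ℕ} (hi : i < Function.minimalPeriod (g • ·) b)
    (hj : j < Function.minimalPeriod (g • ·) b) (hij : g ^ i • b = g ^ j • b) : i = j := by
  wlog hle : i ≤ j generalizing i j
  · exact (this hj hi hij.symm (le_of_not_ge hle)).symm
  have h1 : g ^ i • (g ^ (j - i) • b) = g ^ i • b := by
    rw [smul_smul, ← pow_add, Nat.add_sub_cancel' hle, hij]
  have h2 : g ^ (j - i) • b = b := smul_left_cancel _ h1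
  have := (pow_smul_eq_iff_minimalPeriod_dvd).mp h2
  have hlt : j - i < Function.minimalPeriod (g • ·) b := lt_of_le_of_lt (Nat.sub_le _ _) hj
  have h0 : j - i = 0 := Nat.eq_zero_of_dvd_of_lt this hlt
  omega

lemma card_orbit_eq_minimalPeriod {G β : Type*} [Group G] [MulAction G β] (g : G) (b : β) :
    Nat.card (MulAction.orbit (Subgroup.zpowers g) b) = Function.minimalPeriod (g • ·) b := by
  rw [Nat.card_congr (MulAction.orbitZPowersEquiv g b), Nat.card_zmod]

/-- Let `h ∈ H \ K` and `k ∈ K \ H` in a periodic group `G`, let `g = k * h⁻¹`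
and `L = ⟨g⟩` (a finite cyclic group).  Let `m` and `n` be the sizes of the
`L`-orbits of the trivial cosets `H ∈ G/H` and `K ∈ G/K`.  If `m ≥ n`, then the
`2n` cosets `H, K, gH, gK, …, gⁿ⁻¹H, gⁿ⁻¹K` are pairwise distinct. -/
theorem stmt3 (G : Type*) [Group G] (hper : ∀ x : G, IsOfFinOrder x)
    (H K : Subgroup G) (h k : G) (hh : h ∈ H ∧ h ∉ K) (hk : k ∈ K ∧ k ∉ H)
    (g : G) (hg : g = k * h⁻¹) (m n : ℕ)
    (hm : m = Nat.card (MulAction.orbit (Subgroup.zpowers g)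
      (QuotientGroup.mk (1 : G) : G ⧸ H)))
    (hn : n = Nat.card (MulAction.orbit (Subgroup.zpowers g)
      (QuotientGroup.mk (1 : G) : G ⧸ K)))
    (hmn : n ≤ m) :
    Function.Injective (fun p : Fin n ⊕ Fin n =>
      Sum.map (fun i : Fin n => (QuotientGroup.mk (g ^ (i : ℕ)) : G ⧸ H))
        (fun i : Fin n => (QuotientGroup.mk (g ^ (i : ℕ)) : G ⧸ K)) p) := by
  erw [card_orbit_eq_minimalPeriod] at hm hn
  have smulH : ∀ i : ℕ, (QuotientGroup.mk (g ^ i) : G ⧸ H)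
      = g ^ i • (QuotientGroup.mk (1 : G) : G ⧸ H) := by
    intro i; rw [MulAction.Quotient.smul_mk, smul_eq_mul, mul_one]
  have smulK : ∀ i : ℕ, (QuotientGroup.mk (g ^ i) : G ⧸ K)
      = g ^ i • (QuotientGroup.mk (1 : G) : G ⧸ K) := by
    intro i; rw [MulAction.Quotient.smul_mk, smul_eq_mul, mul_one]
  rintro (i | i) (j | j) hij <;> simp only [Sum.map_inl, Sum.map_inr] at hij
  · injection hij with hij
    rw [smulH, smulH] at hij
    have hi := i.isLt; have hj := j.isLt
    exact congrArg Sum.inl (Fin.ext (pow_smul_inj_of_lt_minimalPeriod g _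
      (by omega) (by omega) hij))
  · exact absurd hij (by simp)
  · exact absurd hij (by simp)
  · injection hij with hij
    rw [smulK, smulK] at hij
    have hi := i.isLt; have hj := j.isLt
    exact congrArg Sum.inr (Fin.ext (pow_smul_inj_of_lt_minimalPeriod g _
      (by omega) (by omega) hij))
end

section
/- Let n ∈ ℕ, let R be a ring, let 0 → Mₙ → Mₙ₋₁ → ⋯ → M₁ → M₀ → M₋₁ → 0 be an exact sequence of R-modules, and let L be an R-module. If Extᴿⁱ(L, Mᵢ) = 0 for all i = 0, …, n, then Hom_R(L, M₋₁) = 0. -/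
open CategoryTheory

/-- Let `n ∈ ℕ`, `R` a ring, and `0 → Mₙ → ⋯ → M₀ → M₋₁ → 0` an exact sequence of
`R`-modules; here `M (i+1)` plays the role of `Mᵢ` and `M 0` that of `M₋₁`, the
sequence being encoded by an `ℕ`-indexed complex which vanishes in degrees `> n+1`.
If `Extⁱ_R(L, Mᵢ) = 0` for `i = 0, …, n`, then `Hom_R(L, M₋₁) = 0`. -/
theorem stmt4 (n : ℕ) (R : Type) [Ring R]
    (M : ℕ → Type) [∀ i, AddCommGroup (M i)] [∀ i, Module R (M i)]
    (f : ∀ i, M (i + 1) →ₗ[R] M i)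
    (hzero : ∀ i, n + 1 < i → Subsingleton (M i))
    (hsurj : Function.Surjective (f 0))
    (hexact : ∀ i, LinearMap.range (f (i + 1)) = LinearMap.ker (f i))
    (L : Type) [AddCommGroup L] [Module R L]
    (hext : ∀ i ≤ n, Subsingleton
      (((Ext ℤ (ModuleCat R) i).obj
        (Opposite.op (ModuleCat.of R L))).obj (ModuleCat.of R (M (i + 1))))) :
    Subsingleton (L →ₗ[R] M 0) := by
  classical
  obtain ⟨P⟩ := (inferInstance : HasProjectiveResolution (ModuleCat.of R L)).out
  -- exactness of the Hom complexes
  have hK : ∀ i, i ≤ n →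
      (P.complex.linearYonedaObj ℤ (ModuleCat.of R (M (i+1)))).ExactAt i := by
    intro i hi
    rw [HomologicalComplex.exactAt_iff_isZero_homology]
    exact Limits.IsZero.of_iso
      (@ModuleCat.isZero_of_subsingleton ℤ _ _ (hext i hi)) (P.isoExt i _).symm
  have hproj : ∀ i, Module.Projective R (P.complex.X i) := fun i =>
    (IsProjective.iff_projective _).mpr (P.projective i)
  set D : ∀ i, (P.complex.X (i+1) : Type) →ₗ[R] P.complex.X i :=
    fun i => (P.complex.d (i+1) i).hom with hD
  have hDD : ∀ i, (D i) ∘ₗ (D (i+1)) = 0 := fun i =>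
    (congrArg ModuleCat.Hom.hom (P.complex.d_comp_d (i+2) (i+1) i) : _)
  have hffcomp : ∀ k, (f k) ∘ₗ (f (k+1)) = 0 := by
    intro k
    ext x
    have : f (k+1) x ∈ LinearMap.ker (f k) := by
      rw [← hexact k]; exact LinearMap.mem_range_self _ x
    simpa using this
  -- degree 0 consequence
  have h0 : ∀ ψ : (P.complex.X 0 : Type) →ₗ[R] M 1, ψ ∘ₗ D 0 = 0 → ψ = 0 := by
    intro ψ hψ
    have h := hK 0 (Nat.zero_le n)
    rw [HomologicalComplex.exactAt_iff' _ 0 0 1 (by simp) (by simp)] at h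
    rw [ShortComplex.moduleCat_exact_iff] at h
    obtain ⟨e, he⟩ := h (ModuleCat.ofHom ψ) (ModuleCat.hom_ext hψ)
    have he' : (P.complex.linearYonedaObj ℤ (ModuleCat.of R (M (0+1)))).d 0 0 e =
        ModuleCat.ofHom ψ := he
    rw [HomologicalComplex.shape _ 0 0 (by decide)] at he'
    exact congrArg ModuleCat.Hom.hom he'.symm
  -- higher degree consequence: cocycles are coboundaries
  have hcoB : ∀ k, k + 1 ≤ n →
      ∀ ψ : (P.complex.X (k+1) : Type) →ₗ[R] M (k+2), ψ ∘ₗ D (k+1) = 0 →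
      ∃ e : (P.complex.X k : Type) →ₗ[R] M (k+2), e ∘ₗ D k = ψ := by
    intro k hk ψ hψ
    have h := hK (k+1) hk
    rw [HomologicalComplex.exactAt_iff' _ k (k+1) (k+2) (by simp) (by simp)] at h
    rw [ShortComplex.moduleCat_exact_iff] at h
    obtain ⟨e, he⟩ := h (ModuleCat.ofHom ψ) (ModuleCat.hom_ext hψ)
    exact ⟨e.hom, congrArg ModuleCat.Hom.hom he⟩
  -- lifting through f (k+1)
  have hlift : ∀ (k : ℕ) (u : (P.complex.X (k+1) : Type) →ₗ[R] M (k+1)),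
      (f k) ∘ₗ u = 0 → ∃ h : (P.complex.X (k+1) : Type) →ₗ[R] M (k+2),
        (f (k+1)) ∘ₗ h = u := by
    intro k u hu
    have hp := hproj (k+1)
    have hmem : ∀ x, f (k+1) x ∈ LinearMap.ker (f k) := by
      intro x; rw [← hexact k]; exact LinearMap.mem_range_self _ x
    have hs : Function.Surjective
        (LinearMap.codRestrict (LinearMap.ker (f k)) (f (k+1)) hmem) := by
      rintro ⟨y, hy⟩
      rw [← hexact k] at hy
      obtain ⟨x, hx⟩ := hy
      exact ⟨x, Subtype.ext hx⟩
    have humem : ∀ x, u x ∈ LinearMap.ker (f k) := by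
      intro x
      simpa using LinearMap.congr_fun hu x
    obtain ⟨h, hh⟩ := Module.projective_lifting_property
      (LinearMap.codRestrict (LinearMap.ker (f k)) (f (k+1)) hmem)
      (LinearMap.codRestrict (LinearMap.ker (f k)) u humem) hs
    refine ⟨h, ?_⟩
    ext x
    exact congrArg Subtype.val (LinearMap.congr_fun hh x)
  -- the downward induction
  have V : ∀ j k, k ≤ n → n - k = j →
      ∀ g : (P.complex.X k : Type) →ₗ[R] M (k+1), (f k) ∘ₗ (g ∘ₗ D k) = 0 →
      ∃ g' : (P.complex.X k : Type) →ₗ[R] M (k+1),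
        (f k) ∘ₗ g' = (f k) ∘ₗ g ∧ g' ∘ₗ D k = 0 := by
    intro j
    induction j with
    | zero =>
      intro k hk hj g hg
      obtain ⟨h, hh⟩ := hlift k (g ∘ₗ D k) hg
      have hsub := hzero (k+2) (by omega)
      have h0' : h = 0 := LinearMap.ext fun x => Subsingleton.elim _ _
      refine ⟨g, rfl, ?_⟩
      rw [← hh, h0', LinearMap.comp_zero]
    | succ j ih =>
      intro k hk hj g hg
      obtain ⟨h, hh⟩ := hlift k (g ∘ₗ D k) hg
      have h1 : (f (k+1)) ∘ₗ (h ∘ₗ D (k+1)) = 0 := by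
        rw [← LinearMap.comp_assoc, hh, LinearMap.comp_assoc, hDD, LinearMap.comp_zero]
      obtain ⟨h', hf', hd'⟩ := ih (k+1) (by omega) (by omega) h h1
      obtain ⟨e, he⟩ := hcoB k (by omega) h' hd'
      refine ⟨g - (f (k+1)) ∘ₗ e, ?_, ?_⟩
      · rw [LinearMap.comp_sub, ← LinearMap.comp_assoc, hffcomp k,
          LinearMap.zero_comp, sub_zero]
      · rw [LinearMap.sub_comp, ← hh, LinearMap.comp_assoc, he, hf', sub_self]
  -- conclusion
  refine subsingleton_of_forall_eq 0 fun φ => ?_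
  have hp0 := hproj 0
  have hεsurj : Function.Surjective (P.π.f 0) :=
    (ModuleCat.epi_iff_surjective _).mp inferInstance
  obtain ⟨ε, hε⟩ : ∃ ε : (P.complex.X 0 : Type) →ₗ[R] L, ε = (P.π.f 0).hom := ⟨_, rfl⟩
  obtain ⟨g, hg⟩ := Module.projective_lifting_property (f 0)
    (φ ∘ₗ ε) hsurj
  have hεd : ε ∘ₗ D 0 = 0 :=
    hε ▸ congrArg ModuleCat.Hom.hom P.complex_d_comp_π_f_zero
  have hg0 : (f 0) ∘ₗ (g ∘ₗ D 0) = 0 := by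
    rw [← LinearMap.comp_assoc, hg, LinearMap.comp_assoc, hεd, LinearMap.comp_zero]
  obtain ⟨g', hf', hd'⟩ := V n 0 (Nat.zero_le n) (by omega) g hg0
  have hg'0 : g' = 0 := h0 g' hd'
  rw [hg'0, LinearMap.comp_zero] at hf'
  have hφε : φ ∘ₗ ε = 0 := by
    rw [← hg, ← hf']
  ext x
  obtain ⟨y, rfl⟩ := hεsurj x
  subst hε
  exact LinearMap.congr_fun hφε y
end

section
/- If G is an infinite group that is the union of a strictly increasing chain of proper subgroups (Gₙ)ₙ∈ℕ, and A is a nonzero abelian group, then H¹(G, AG) ≠ 0, where AG = A ⊗_ℤ ℤG is the induced module. More specifically, for a countably infinite locally finite group G, H¹(G, AG) contains a subgroup isomorphic to the countable direct power A^ℕ. -/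
/-- The induced `ℤG`-module `AG = ℤG ⊗_ℤ A`, realized as finitely supported
functions `G →₀ A` with `G` acting by left translation of the support. -/
noncomputable def indRep (G : Type) [Group G] (A : Type) [AddCommGroup A] :
    Representation ℤ G (G →₀ A) where
  toFun g := Finsupp.lmapDomain A ℤ (fun x => g * x)
  map_one' := by
    apply LinearMap.ext; intro f
    simp [Finsupp.lmapDomain]
    exact Finsupp.mapDomain_id
  map_mul' := by
    intro g h
    apply LinearMap.ext; intro f
    simp only [Finsupp.lmapDomain_apply, Module.End.mul_apply]
    rw [← Finsupp.mapDomain_comp]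
    simp [Function.comp_def, mul_assoc]

set_option linter.unusedSectionVars false

open Function Subgroup

namespace Stmt10Aux

variable {G : Type} [Group G] [Countable G] [Infinite G]

lemma exists_not_mem (H : Subgroup G) (hH : Finite H) : ∃ g : G, g ∉ H := by
  by_contra h
  push_neg at h
  have hs : Function.Surjective (fun x : H => (x : G)) := fun g => ⟨⟨g, h g⟩, rfl⟩
  haveI := hH
  haveI := Finite.of_surjective _ hs
  exact not_finite G

lemma exists_sup (hlf : ∀ S : Finset G, Finite (Subgroup.closure (S : Set G)))
    (H : Subgroup G) (hH : Finite H) (xs : Finset G) :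
    ∃ H' : Subgroup G, Finite H' ∧ H ≤ H' ∧ ∀ x ∈ xs, x ∈ H' := by
  classical
  haveI := hH
  have hfin : (H : Set G).Finite := H.carrier.toFinite
  refine ⟨Subgroup.closure ((hfin.toFinset ∪ xs : Finset G) : Set G), hlf _, ?_, ?_⟩
  · intro h hh
    apply Subgroup.subset_closure
    simp [Set.Finite.mem_toFinset, hh]
  · intro x hx
    apply Subgroup.subset_closure
    simp [hx]

lemma exists_step (hlf : ∀ S : Finset G, Finite (Subgroup.closure (S : Set G)))
    (e : ℕ → G) (H : Subgroup G) (hH : Finite H) (n : ℕ) :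
    ∃ z : Subgroup G × G × G,
      Finite z.1 ∧ H ≤ z.1 ∧ e n ∈ z.1 ∧ z.2.1 ∈ z.1 ∧ z.2.2 ∈ z.1 ∧
      z.2.1 ∉ H ∧ z.2.2 ∉ H ∧ z.2.2 * z.2.1⁻¹ ∉ H := by
  classical
  obtain ⟨t, ht⟩ := exists_not_mem H hH
  obtain ⟨H₁, hH₁fin, hHH₁, hsub⟩ := exists_sup hlf H hH {t, e n}
  have htH₁ : t ∈ H₁ := hsub t (by simp)
  obtain ⟨s, hs⟩ := exists_not_mem H₁ hH₁fin
  obtain ⟨H₂, hH₂fin, hH₁H₂, hsub₂⟩ := exists_sup hlf H₁ hH₁fin {s}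
  refine ⟨(H₂, t, s), hH₂fin, hHH₁.trans hH₁H₂, hH₁H₂ (hsub _ (by simp)),
    hH₁H₂ htH₁, hsub₂ s (by simp), ht, fun w => hs (hHH₁ w), fun w => ?_⟩
  exact hs (by simpa using mul_mem (hHH₁ w) htH₁)

variable (hlf : ∀ S : Finset G, Finite (Subgroup.closure (S : Set G))) (e : ℕ → G)

/-- The chain of finite subgroups with witness elements. -/
noncomputable def ch : ℕ → {z : Subgroup G × G × G // Finite z.1}
  | 0 => ⟨(⊥, 1, 1), by infer_instance⟩
  | n + 1 =>
    ⟨(exists_step hlf e (ch n).1.1 (ch n).2 n).choose,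
     (exists_step hlf e (ch n).1.1 (ch n).2 n).choose_spec.1⟩

/-- The subgroups. -/
noncomputable def GG (n : ℕ) : Subgroup G := (ch hlf e n).1.1
/-- Elements `tt n ∈ GG (n+1) \ GG n`. -/
noncomputable def tt (n : ℕ) : G := (ch hlf e (n + 1)).1.2.1
/-- Elements `ss n ∈ GG (n+1) \ (GG n ∪ GG n * tt n)`. -/
noncomputable def ss (n : ℕ) : G := (ch hlf e (n + 1)).1.2.2

lemma GG_fin (n : ℕ) : Finite (GG hlf e n) := (ch hlf e n).2

lemma ch_spec (n : ℕ) :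
    GG hlf e n ≤ GG hlf e (n + 1) ∧ e n ∈ GG hlf e (n + 1) ∧
    tt hlf e n ∈ GG hlf e (n + 1) ∧ ss hlf e n ∈ GG hlf e (n + 1) ∧
    tt hlf e n ∉ GG hlf e n ∧ ss hlf e n ∉ GG hlf e n ∧
    ss hlf e n * (tt hlf e n)⁻¹ ∉ GG hlf e n := by
  have h := (exists_step hlf e (ch hlf e n).1.1 (ch hlf e n).2 n).choose_spec
  exact ⟨h.2.1, h.2.2.1, h.2.2.2.1, h.2.2.2.2.1, h.2.2.2.2.2.1, h.2.2.2.2.2.2.1,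
    h.2.2.2.2.2.2.2⟩

lemma GG_mono : Monotone (GG hlf e) :=
  monotone_nat_of_le_succ fun n => (ch_spec hlf e n).1

lemma GG_exists (he : Surjective e) (g : G) : ∃ n, g ∈ GG hlf e n := by
  obtain ⟨n, rfl⟩ := he g
  exact ⟨n + 1, (ch_spec hlf e n).2.1⟩

lemma tt_mem (n : ℕ) : tt hlf e n ∈ GG hlf e (n + 1) := (ch_spec hlf e n).2.2.1
lemma tt_not_mem (n : ℕ) : tt hlf e n ∉ GG hlf e n := (ch_spec hlf e n).2.2.2.2.1
lemma ss_mem (n : ℕ) : ss hlf e n ∈ GG hlf e (n + 1) := (ch_spec hlf e n).2.2.2.1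
lemma ss_not_mem (n : ℕ) : ss hlf e n ∉ GG hlf e n := (ch_spec hlf e n).2.2.2.2.2.1
lemma ss_tt (n : ℕ) : ss hlf e n * (tt hlf e n)⁻¹ ∉ GG hlf e n :=
  (ch_spec hlf e n).2.2.2.2.2.2

lemma tt_injective : Injective (tt hlf e) := by
  intro m m' h
  by_contra hne
  rcases Nat.lt_or_ge m m' with hl | hg
  · exact tt_not_mem hlf e m' (h ▸ GG_mono hlf e hl (tt_mem hlf e m))
  · exact tt_not_mem hlf e m (h ▸ GG_mono hlf e (Nat.lt_of_le_of_ne hg (Ne.symm hne))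
      (tt_mem hlf e m'))

lemma ss_injective : Injective (ss hlf e) := by
  intro m m' h
  by_contra hne
  rcases Nat.lt_or_ge m m' with hl | hg
  · exact ss_not_mem hlf e m' (h ▸ GG_mono hlf e hl (ss_mem hlf e m))
  · exact ss_not_mem hlf e m (h ▸ GG_mono hlf e (Nat.lt_of_le_of_ne hg (Ne.symm hne))
      (ss_mem hlf e m'))

/-- `g` lies at "level" `m` in the distinguished coset `GG m * tt m`. -/
def Lev (m : ℕ) (g : G) : Prop :=
  g ∉ GG hlf e m ∧ g * (tt hlf e m)⁻¹ ∈ GG hlf e m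

lemma Lev.mem_succ {m : ℕ} {g : G} (h : Lev hlf e m g) : g ∈ GG hlf e (m + 1) := by
  have := mul_mem (GG_mono hlf e (Nat.le_succ m) h.2) (tt_mem hlf e m)
  simpa using this

lemma lev_unique {m m' : ℕ} {g : G} (h : Lev hlf e m g) (h' : Lev hlf e m' g) : m = m' := by
  rcases lt_trichotomy m m' with hl | heq | hl
  · exact absurd (GG_mono hlf e hl (h.mem_succ)) h'.1
  · exact heq
  · exact absurd (GG_mono hlf e hl (h'.mem_succ)) h.1

/-- no level exists below the subgroup a point belongs to, etc.: if `g ∈ GG (m+1) \ GG m`,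
any level of `g` must be `m`. -/
lemma lev_eq {m m' : ℕ} {g : G} (hg1 : g ∈ GG hlf e (m + 1)) (hg : g ∉ GG hlf e m)
    (h : Lev hlf e m' g) : m' = m := by
  rcases lt_trichotomy m' m with hl | heq | hl
  · exact absurd (GG_mono hlf e hl h.mem_succ) hg
  · exact heq
  · exact absurd (GG_mono hlf e hl hg1) h.1

lemma exists_level (he : Surjective e) {k : ℕ} {g : G} (hg : g ∉ GG hlf e k) :
    ∃ m, k ≤ m ∧ g ∉ GG hlf e m ∧ g ∈ GG hlf e (m + 1) := by
  classical
  have hP : ∃ n, g ∈ GG hlf e n := GG_exists hlf e he g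
  have hk : k < Nat.find hP := by
    by_contra h
    push_neg at h
    exact hg (GG_mono hlf e h (Nat.find_spec hP))
  refine ⟨Nat.find hP - 1, by omega, Nat.find_min hP (by omega), ?_⟩
  have : Nat.find hP - 1 + 1 = Nat.find hP := by omega
  rw [this]
  exact Nat.find_spec hP

variable {A : Type} [AddCommGroup A]

/-- The "infinitely supported" function whose formal coboundary gives our cocycles. -/
noncomputable def xx (a : ℕ → A) (g : G) : A := open Classical in
  if h : ∃ m, Lev hlf e m g then a (Nat.unpair h.choose).1 else 0

lemma xx_eq {a : ℕ → A} {m : ℕ} {g : G} (hm : Lev hlf e m g) :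
    xx hlf e a g = a (Nat.unpair m).1 := by
  rw [xx, dif_pos ⟨m, hm⟩,
    lev_unique hlf e (Exists.choose_spec (⟨m, hm⟩ : ∃ m, Lev hlf e m g)) hm]

lemma xx_eq_zero {a : ℕ → A} {g : G} (h : ∀ m, ¬ Lev hlf e m g) : xx hlf e a g = 0 := by
  rw [xx, dif_neg]
  push_neg
  exact fun m hm => absurd hm (h m)

lemma xx_one (a : ℕ → A) : xx hlf e a 1 = 0 :=
  xx_eq_zero hlf e fun m hm => hm.1 (one_mem _)

lemma xx_add (a b : ℕ → A) (g : G) :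
    xx hlf e (a + b) g = xx hlf e a g + xx hlf e b g := by
  by_cases h : ∃ m, Lev hlf e m g
  · obtain ⟨m, hm⟩ := h
    rw [xx_eq hlf e hm, xx_eq hlf e hm, xx_eq hlf e hm]; rfl
  · push_neg at h
    rw [xx_eq_zero hlf e h, xx_eq_zero hlf e h, xx_eq_zero hlf e h, add_zero]

/-- Key translation invariance: if `u ∈ GG k` and `h ∉ GG k` then `xx a (u * h) = xx a h`. -/
lemma xx_translate (he : Surjective e) (a : ℕ → A) {k : ℕ} {u : G} (hu : u ∈ GG hlf e k)
    {h : G} (hh : h ∉ GG hlf e k) : xx hlf e a (u * h) = xx hlf e a h := by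
  obtain ⟨m, hkm, hm, hm1⟩ := exists_level hlf e he hh
  have hu' : u ∈ GG hlf e m := GG_mono hlf e hkm hu
  have huh : u * h ∉ GG hlf e m := fun w => hm (by simpa using mul_mem (inv_mem hu') w)
  have huh1 : u * h ∈ GG hlf e (m + 1) := mul_mem (GG_mono hlf e (Nat.le_succ m) hu') hm1
  by_cases hc : h * (tt hlf e m)⁻¹ ∈ GG hlf e m
  · have l1 : Lev hlf e m h := ⟨hm, hc⟩
    have l2 : Lev hlf e m (u * h) := ⟨huh, by rw [mul_assoc]; exact mul_mem hu' hc⟩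
    rw [xx_eq hlf e l1, xx_eq hlf e l2]
  · have h1 : ∀ m', ¬ Lev hlf e m' h := by
      intro m' hl
      have := lev_eq hlf e hm1 hm hl
      subst this
      exact hc hl.2
    have h2 : ∀ m', ¬ Lev hlf e m' (u * h) := by
      intro m' hl
      have := lev_eq hlf e huh1 huh hl
      subst this
      refine hc ?_
      have := mul_mem (inv_mem hu') hl.2
      simpa [mul_assoc] using this
    rw [xx_eq_zero hlf e h1, xx_eq_zero hlf e h2]


lemma xx_support_finite (he : Surjective e) (a : ℕ → A) (g : G) :
    (Function.support fun z => xx hlf e a (g⁻¹ * z) - xx hlf e a z).Finite := by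
  obtain ⟨k, hk⟩ := GG_exists hlf e he g⁻¹
  haveI := GG_fin hlf e k
  apply Set.Finite.subset (GG hlf e k).carrier.toFinite
  intro z hz
  simp only [Function.mem_support, ne_eq] at hz
  by_contra hzk
  exact hz (by rw [xx_translate hlf e he a hk (fun w => hzk w), sub_self])

/-- The cocycle associated to a sequence `a : ℕ → A`. -/
noncomputable def Fc (he : Surjective e) (a : ℕ → A) (g : G) : G →₀ A :=
  Finsupp.ofSupportFinite _ (xx_support_finite hlf e he a g)

lemma Fc_apply (he : Surjective e) (a : ℕ → A) (g z : G) :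
    Fc hlf e he a g z = xx hlf e a (g⁻¹ * z) - xx hlf e a z := rfl

lemma Fc_cocycle (he : Surjective e) (a : ℕ → A) (g h : G) :
    Fc hlf e he a (g * h) =
      Finsupp.mapDomain (fun x => g * x) (Fc hlf e he a h) + Fc hlf e he a g := by
  ext z
  rw [Finsupp.add_apply]
  have hmd : Finsupp.mapDomain (fun x => g * x) (Fc hlf e he a h) z
      = Fc hlf e he a h (g⁻¹ * z) := by
    have := Finsupp.mapDomain_apply (mul_right_injective g) (Fc hlf e he a h) (g⁻¹ * z)
    simpa using this
  rw [hmd, Fc_apply, Fc_apply, Fc_apply, mul_inv_rev, mul_assoc]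
  abel

lemma Fc_add (he : Surjective e) (a b : ℕ → A) (g : G) :
    Fc hlf e he (a + b) g = Fc hlf e he a g + Fc hlf e he b g := by
  ext z
  rw [Finsupp.add_apply, Fc_apply, Fc_apply, Fc_apply, xx_add, xx_add]
  abel

lemma Fc_coboundary (he : Surjective e) (a : ℕ → A) (y : G →₀ A)
    (hy : ∀ g z : G, (y (g⁻¹ * z) - y z : A) = Fc hlf e he a g z) : a = 0 := by
  have hconst : ∀ w : G, xx hlf e a w - y w = - y 1 := by
    intro w
    have h1 := hy w⁻¹ 1
    rw [Fc_apply] at h1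
    simp only [inv_inv, mul_one] at h1
    rw [xx_one, sub_zero] at h1
    rw [← h1]
    abel
  have hsuppfin : {g : G | y g ≠ 0}.Finite :=
    Set.Finite.subset y.support.finite_toSet (fun g hg => Finsupp.mem_support_iff.2 hg)
  have hss_nolev : ∀ m m', ¬ Lev hlf e m' (ss hlf e m) := by
    intro m m' hl
    have := lev_eq hlf e (ss_mem hlf e m) (ss_not_mem hlf e m) hl
    subst this
    exact ss_tt hlf e m' hl.2
  -- the constant is zero
  have hc : (- y 1 : A) = 0 := by
    have hfin : ((ss hlf e) ⁻¹' {g : G | y g ≠ 0}).Finite :=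
      Set.Finite.preimage (Set.injOn_of_injective (ss_injective hlf e)) hsuppfin
    obtain ⟨m, hm⟩ := hfin.infinite_compl.nonempty
    simp only [Set.mem_compl_iff, Set.mem_preimage, Set.mem_setOf_eq, not_not] at hm
    have := hconst (ss hlf e m)
    rw [xx_eq_zero hlf e (hss_nolev m), hm, sub_zero] at this
    exact this.symm
  funext n
  have hinf : {m : ℕ | (Nat.unpair m).1 = n}.Infinite := by
    apply Set.infinite_of_injective_forall_mem (f := fun k => Nat.pair n k)
    · intro k k' h
      simpa using congrArg (fun p => (Nat.unpair p).2) h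
    · intro k
      simp [Nat.unpair_pair]
  have hfin2 : ((tt hlf e) ⁻¹' {g : G | y g ≠ 0}).Finite :=
    Set.Finite.preimage (Set.injOn_of_injective (tt_injective hlf e)) hsuppfin
  obtain ⟨m, hm⟩ := (hinf.diff hfin2).nonempty
  obtain ⟨hm1, hm2⟩ := hm
  simp only [Set.mem_preimage, Set.mem_setOf_eq, not_not] at hm2
  have hlev : Lev hlf e m (tt hlf e m) := ⟨tt_not_mem hlf e m, by simpa using one_mem (GG hlf e m)⟩
  have hfinal := hconst (tt hlf e m)
  rw [xx_eq hlf e hlev, Set.mem_setOf_eq.mp hm1, hm2, sub_zero, hc] at hfinal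
  exact hfinal

end Stmt10Aux

open Stmt10Aux in
/-- If `G` is a countably infinite locally finite group and `A` an abelian group
(with trivial `G`-action), then `H¹(G, AG) ≠ 0` whenever `A ≠ 0`; more
specifically, `H¹(G, AG)` contains a subgroup isomorphic to the countable direct
power `A^ℕ`. -/
theorem stmt10 (G : Type) [Group G] [Countable G] [Infinite G]
    (hlf : ∀ S : Finset G, Finite (Subgroup.closure (S : Set G)))
    (A : Type) [AddCommGroup A] :
    (Nontrivial A → Nontrivial (groupCohomology (Rep.of (indRep G A)) 1)) ∧
    ∃ f : (ℕ → A) →+ groupCohomology (Rep.of (indRep G A)) 1,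
      Function.Injective f := by
  classical
  obtain ⟨e, he⟩ := exists_surjective_nat G
  set V := Rep.of (indRep G A) with hV
  have hrho : ∀ (g z : G) (v : G →₀ A), (indRep G A g v) z = v (g⁻¹ * z) := by
    intro g z v
    show (Finsupp.mapDomain (fun x => g * x) v) z = v (g⁻¹ * z)
    have := Finsupp.mapDomain_apply (mul_right_injective g) v (g⁻¹ * z)
    simpa using this
  have hcoc : ∀ a : ℕ → A,
      (fun g => Fc hlf e he a g : G → (G →₀ A)) ∈ groupCohomology.cocycles₁ V := by
    intro a
    rw [groupCohomology.mem_cocycles₁_iff]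
    intro g h
    show Fc hlf e he a (g * h) =
      Finsupp.mapDomain (fun x => g * x) (Fc hlf e he a h) + Fc hlf e he a g
    exact Fc_cocycle hlf e he a g h
  set Z : (ℕ → A) → groupCohomology.cocycles₁ V := fun a => ⟨_, hcoc a⟩ with hZ
  have hZadd : ∀ a b, Z (a + b) = Z a + Z b := by
    intro a b
    apply Subtype.ext
    funext g
    show Fc hlf e he (a + b) g = (Z a).1 g + (Z b).1 g
    rw [Fc_add]
  set eqv := LinearEquiv.refl ℤ (groupCohomology V 1) with heqv
  set Φ : (ℕ → A) → groupCohomology V 1 :=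
    fun a => eqv.symm (groupCohomology.H1π V (Z a)) with hΦ
  have hΦadd : ∀ a b, Φ (a + b) = Φ a + Φ b := by
    intro a b
    rw [hΦ]
    simp only [hZadd, map_add]
  set f : (ℕ → A) →+ groupCohomology V 1 := AddMonoidHom.mk' Φ hΦadd with hf
  have hinj : Function.Injective f := by
    rw [injective_iff_map_eq_zero]
    intro a ha
    have h0 : groupCohomology.H1π V (Z a) = 0 := by
      apply eqv.symm.injective
      rw [map_zero]
      exact ha
    have hmem : ⇑(Z a) ∈ groupCohomology.coboundaries₁ V :=
      (groupCohomology.H1π_eq_zero_iff _).mp h0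
    obtain ⟨y, hy⟩ := hmem
    let y' : G →₀ A := y
    have hyy : ∀ g : G, indRep G A g y' - y' = Fc hlf e he a g := by
      intro g
      have h1 := congrFun hy g
      rw [groupCohomology.d₀₁_hom_apply] at h1
      exact h1
    refine Fc_coboundary hlf e he a y' (fun g z => ?_)
    rw [← hyy g, Finsupp.sub_apply, hrho]
  refine ⟨fun hA => ?_, f, hinj⟩
  obtain ⟨x, hx⟩ := exists_ne (0 : A)
  refine nontrivial_of_ne (f (fun _ => x)) 0 (fun h => hx ?_)
  have : (fun _ => x : ℕ → A) = 0 := hinj (by rw [h, map_zero])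
  exact congrFun this 0
end

section
/- If G is a countably infinite locally finite group and A is an abelian group, then Hⁿ(G, AG) = 0 for all n ≥ 2. -/
namespace Stmt11Aux

variable {G : Type} [Group G] {A : Type} [AddCommGroup A]

lemma indRep_apply (g : G) (f : G →₀ A) (x : G) :
    (indRep G A g f) (g * x) = f x := by
  simp [indRep, Finsupp.mapDomain_apply (mul_right_injective g)]

/-- chosen representative of the right coset `H x`. -/
noncomputable def rrep (H : Subgroup G) (x : G) : G :=
  (Quotient.mk (QuotientGroup.rightRel H) x).out

/-- the `H`-component: `x = pcomp H x * rrep H x`. -/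
noncomputable def pcomp (H : Subgroup G) (x : G) : G := x * (rrep H x)⁻¹

lemma pcomp_mem (H : Subgroup G) (x : G) : pcomp H x ∈ H := by
  have h := Quotient.mk_out (s := QuotientGroup.rightRel H) x
  exact (QuotientGroup.rightRel_apply).1 h

lemma pcomp_mul_rrep (H : Subgroup G) (x : G) : pcomp H x * rrep H x = x := by
  simp [pcomp]

lemma rrep_mul (H : Subgroup G) {h : G} (hh : h ∈ H) (x : G) :
    rrep H (h * x) = rrep H x := by
  unfold rrep
  congr 1
  exact Quotient.sound ((QuotientGroup.rightRel_apply).mpr (by simpa using hh))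

lemma pcomp_mul (H : Subgroup G) {h : G} (hh : h ∈ H) (x : G) :
    pcomp H (h * x) = h * pcomp H x := by
  simp [pcomp, rrep_mul H hh, mul_assoc]

/-- Partial contracting homotopy attached to a finite subgroup `H`. -/
noncomputable def sOp (H : Subgroup G) [Finite H] (m : ℕ)
    (f : (Fin (m + 1) → G) → (G →₀ A)) (g : Fin m → G) : G →₀ A :=
  Finsupp.ofSupportFinite (fun x => f (Fin.cons (pcomp H x)⁻¹ g) (rrep H x)) (by
    apply Set.Finite.subset (s := ⋃ (h : H), ((h : G) * ·) ''
      ↑(f (Fin.cons ((h : G))⁻¹ g)).support)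
    · exact Set.finite_iUnion fun h =>
        (f (Fin.cons ((h : G))⁻¹ g)).support.finite_toSet.image _
    · intro x hx
      refine Set.mem_iUnion.2 ⟨⟨pcomp H x, pcomp_mem H x⟩, ?_⟩
      exact ⟨rrep H x, by simpa using hx, pcomp_mul_rrep H x⟩)

lemma sOp_apply (H : Subgroup G) [Finite H] (m : ℕ)
    (f : (Fin (m + 1) → G) → (G →₀ A)) (g : Fin m → G) (x : G) :
    sOp H m f g x = f (Fin.cons (pcomp H x)⁻¹ g) (rrep H x) := rfl

lemma contractNth_zero_cons (m : ℕ) (a : G) (g : Fin (m + 1) → G) :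
    Fin.contractNth 0 (· * ·) (Fin.cons a g) = Fin.cons (a * g 0) (Fin.tail g) := by
  funext i
  refine Fin.cases ?_ (fun i => ?_) i
  · rw [Fin.contractNth_apply_of_eq _ _ _ _ (by simp)]
    simp
  · rw [Fin.contractNth_apply_of_gt _ _ _ _ (by simp)]
    simp [Fin.tail]

lemma contractNth_succ_cons (m : ℕ) (j : Fin (m + 1)) (a : G) (g : Fin (m + 1) → G) :
    Fin.contractNth j.succ (· * ·) (Fin.cons a g) =
      Fin.cons a (Fin.contractNth j (· * ·) g) := by
  funext i
  refine Fin.cases ?_ (fun i => ?_) i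
  · rw [Fin.contractNth_apply_of_lt _ _ _ _ (by simp)]
    simp
  · rcases lt_trichotomy (i : ℕ) (j : ℕ) with h | h | h
    · rw [Fin.contractNth_apply_of_lt _ _ _ _ (by simpa using h), Fin.cons_succ,
        Fin.contractNth_apply_of_lt _ _ _ _ h, ← Fin.succ_castSucc, Fin.cons_succ]
    · rw [Fin.contractNth_apply_of_eq _ _ _ _ (by simpa using h)]
      conv_rhs => rw [Fin.cons_succ, Fin.contractNth_apply_of_eq _ _ _ _ h]
      rw [← Fin.succ_castSucc, Fin.cons_succ, Fin.cons_succ]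
    · rw [Fin.contractNth_apply_of_gt _ _ _ _ (by simpa using h)]
      conv_rhs => rw [Fin.cons_succ, Fin.contractNth_apply_of_gt _ _ _ _ h]
      rw [Fin.cons_succ]

lemma contractNth_mem (m : ℕ) (H : Subgroup G) (j : Fin (m + 1)) (g : Fin (m + 1) → G)
    (hg : ∀ i, g i ∈ H) (i : Fin m) : Fin.contractNth j (· * ·) g i ∈ H := by
  rcases lt_trichotomy (i : ℕ) (j : ℕ) with h | h | h
  · rw [Fin.contractNth_apply_of_lt _ _ _ _ h]; exact hg _
  · rw [Fin.contractNth_apply_of_eq _ _ _ _ h]; exact mul_mem (hg _) (hg _)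
  · rw [Fin.contractNth_apply_of_gt _ _ _ _ h]; exact hg _

open groupCohomology

/-- The inhomogeneous cochain differential, specialized to `indRep`. -/
noncomputable def D (G : Type) [Group G] (A : Type) [AddCommGroup A] (m : ℕ) :
    ((Fin m → G) → (G →₀ A)) →ₗ[ℤ] ((Fin (m + 1) → G) → (G →₀ A)) :=
  (inhomogeneousCochains.d (Rep.of (indRep G A)) m).hom

lemma D_apply (m : ℕ) (f : (Fin m → G) → (G →₀ A)) (g : Fin (m + 1) → G) :
    D G A m f g = indRep G A (g 0) (f fun i => g i.succ) +
      Finset.univ.sum fun j : Fin (m + 1) =>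
        (-1 : ℤ) ^ ((j : ℕ) + 1) • f (Fin.contractNth j (· * ·) g) := rfl

lemma homotopyEq (H : Subgroup G) [Finite H] (m : ℕ) (f : (Fin (m + 1) → G) → (G →₀ A))
    (g : Fin (m + 1) → G) (hg : ∀ i, g i ∈ H) :
    D G A m (sOp H m f) g + sOp H (m + 1) (D G A (m + 1) f) g = f g := by
  ext x
  set p := pcomp H x with hp
  set r := rrep H x with hr
  have hpH : p ∈ H := pcomp_mem H x
  have hpr : p * r = x := pcomp_mul_rrep H x
  have hrx : r = p⁻¹ * x := by rw [← hpr]; group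
  have e1 : (D G A m (sOp H m f) g) x
      = f (Fin.cons (p⁻¹ * g 0) (Fin.tail g)) r
        + ∑ j : Fin (m + 1),
            (-1 : ℤ) ^ ((j : ℕ) + 1) • f (Fin.cons p⁻¹ (Fin.contractNth j (· * ·) g)) r := by
    rw [D_apply, Finsupp.add_apply]
    congr 1
    · conv_lhs => rw [show x = g 0 * ((g 0)⁻¹ * x) by group]
      rw [indRep_apply, sOp_apply, pcomp_mul H (inv_mem (hg 0)), rrep_mul H (inv_mem (hg 0))]
      have ht : Fin.cons (((g 0)⁻¹ * p)⁻¹) (fun i => g i.succ)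
          = Fin.cons (p⁻¹ * g 0) (Fin.tail g) := by
        rw [mul_inv_rev, inv_inv]; rfl
      rw [ht]
    · rw [Finsupp.finset_sum_apply]
      refine Finset.sum_congr rfl fun j _ => ?_
      rw [Finsupp.smul_apply, sOp_apply]
  have e2 : (sOp H (m + 1) (D G A (m + 1) f) g) x
      = f g x + ((-1 : ℤ) ^ (0 + 1) • f (Fin.cons (p⁻¹ * g 0) (Fin.tail g)) r
          + ∑ j : Fin (m + 1),
              (-1 : ℤ) ^ ((j : ℕ) + 1 + 1) • f (Fin.cons p⁻¹ (Fin.contractNth j (· * ·) g)) r) := by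
    rw [sOp_apply, D_apply, Finsupp.add_apply]
    congr 1
    · rw [Fin.cons_zero]
      have hz : (f fun i => Fin.cons (α := fun _ => G) p⁻¹ g i.succ) = f g := by
        congr 1
      rw [hz, ← hr, ← hp, hrx, indRep_apply]
    · rw [Finsupp.finset_sum_apply, Fin.sum_univ_succ]
      congr 1
      · rw [Finsupp.smul_apply, contractNth_zero_cons, Fin.val_zero]
      · refine Finset.sum_congr rfl fun j _ => ?_
        rw [Finsupp.smul_apply, contractNth_succ_cons, Fin.val_succ]
  rw [Finsupp.add_apply, e1, e2]
  have hsgn : ∀ (j : ℕ) (z : A), (-1 : ℤ) ^ (j + 1 + 1) • z = -((-1 : ℤ) ^ (j + 1) • z) := by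
    intro j z
    rw [pow_succ, mul_smul]
    simp
  simp only [hsgn, pow_one, neg_one_smul]
  rw [Finset.sum_neg_distrib]
  abel

lemma D_D (m : ℕ) : (D G A (m + 1)).comp (D G A m) = 0 := by
  have h := (inhomogeneousCochains (Rep.of (indRep G A))).d_comp_d m (m + 1) (m + 2)
  rw [inhomogeneousCochains.d_def, inhomogeneousCochains.d_def] at h
  have h2 := congrArg ModuleCat.Hom.hom h
  rw [ModuleCat.hom_comp, ModuleCat.hom_zero] at h2
  exact h2

lemma cons_mem (H : Subgroup G) {a : G} (ha : a ∈ H) {l : ℕ} {g : Fin l → G}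
    (hg : ∀ i, g i ∈ H) (i : Fin (l + 1)) : Fin.cons (α := fun _ => G) a g i ∈ H := by
  refine Fin.cases ?_ (fun j => ?_) i
  · simpa using ha
  · simpa using hg j

lemma sOp_zero_on (H : Subgroup G) [Finite H] (m : ℕ) (f : (Fin (m + 1) → G) → (G →₀ A))
    (g : Fin m → G) (hf : ∀ t : Fin (m + 1) → G, (∀ i, t i ∈ H) → f t = 0)
    (hg : ∀ i, g i ∈ H) : sOp H m f g = 0 := by
  ext x
  rw [sOp_apply]
  rw [hf _ (cons_mem H (inv_mem (pcomp_mem H x)) hg)]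
  rfl

/-- any cocycle is killed on `H`-tuples by the homotopy primitive. -/
lemma D_sOp (H : Subgroup G) [Finite H] (m : ℕ) (f : (Fin (m + 2) → G) → (G →₀ A))
    (hf : D G A (m + 2) f = 0) (g : Fin (m + 2) → G) (hg : ∀ i, g i ∈ H) :
    D G A (m + 1) (sOp H (m + 1) f) g = f g := by
  have h := homotopyEq H (m + 1) f g hg
  rw [hf] at h
  have h2 : sOp H (m + 2) (0 : (Fin (m + 3) → G) → (G →₀ A)) g = 0 := by
    ext x; rfl
  rw [h2, add_zero] at h
  exact h

/-- the recursively corrected sequence of primitives. -/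
noncomputable def useq (Hs : ℕ → Subgroup G) (hfin : ∀ k, Finite (Hs k)) (m : ℕ)
    (f : (Fin (m + 2) → G) → (G →₀ A)) : ℕ → ((Fin (m + 1) → G) → (G →₀ A))
  | 0 => letI := hfin 0; sOp (Hs 0) (m + 1) f
  | (k + 1) =>
      letI := hfin (k + 1); letI := hfin k
      sOp (Hs (k + 1)) (m + 1) f +
        D G A m (sOp (Hs k) m (useq Hs hfin m f k - sOp (Hs (k + 1)) (m + 1) f))

lemma useq_spec1 (Hs : ℕ → Subgroup G) (hfin : ∀ k, Finite (Hs k)) (m : ℕ)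
    (f : (Fin (m + 2) → G) → (G →₀ A)) (hf : D G A (m + 2) f = 0) (k : ℕ)
    (g : Fin (m + 2) → G) (hg : ∀ i, g i ∈ Hs k) :
    D G A (m + 1) (useq Hs hfin m f k) g = f g := by
  cases k with
  | zero =>
      letI := hfin 0
      rw [show useq Hs hfin m f 0 = sOp (Hs 0) (m + 1) f from rfl]
      exact D_sOp (Hs 0) m f hf g hg
  | succ k =>
      letI := hfin (k + 1); letI := hfin k
      rw [show useq Hs hfin m f (k + 1) = sOp (Hs (k + 1)) (m + 1) f +
        D G A m (sOp (Hs k) m (useq Hs hfin m f k - sOp (Hs (k + 1)) (m + 1) f)) from rfl]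
      rw [map_add]
      have hdd := LinearMap.congr_fun (D_D (G := G) (A := A) m)
        (sOp (Hs k) m (useq Hs hfin m f k - sOp (Hs (k + 1)) (m + 1) f))
      rw [LinearMap.comp_apply] at hdd
      rw [LinearMap.zero_apply] at hdd
      rw [Pi.add_apply, hdd, Pi.zero_apply, add_zero]
      exact D_sOp (Hs (k + 1)) m f hf g hg

lemma useq_spec2 (Hs : ℕ → Subgroup G) (hfin : ∀ k, Finite (Hs k))
    (hmono : ∀ k, Hs k ≤ Hs (k + 1)) (m : ℕ)
    (f : (Fin (m + 2) → G) → (G →₀ A)) (hf : D G A (m + 2) f = 0) (k : ℕ)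
    (g : Fin (m + 1) → G) (hg : ∀ i, g i ∈ Hs k) :
    useq Hs hfin m f (k + 1) g = useq Hs hfin m f k g := by
  letI := hfin (k + 1); letI := hfin k
  set w := sOp (Hs (k + 1)) (m + 1) f with hw
  set c := useq Hs hfin m f k - w with hc
  have hhom := homotopyEq (Hs k) m c g hg
  have hzero : sOp (Hs k) (m + 1) (D G A (m + 1) c) g = 0 := by
    refine sOp_zero_on (Hs k) (m + 1) _ g (fun t ht => ?_) hg
    rw [hc, map_sub, Pi.sub_apply]
    rw [useq_spec1 Hs hfin m f hf k t ht]
    rw [hw, D_sOp (Hs (k + 1)) m f hf t (fun i => hmono k (ht i))]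
    exact sub_self _
  rw [hzero, add_zero] at hhom
  rw [show useq Hs hfin m f (k + 1) = w + D G A m (sOp (Hs k) m c) from rfl]
  rw [Pi.add_apply, hhom, hc, Pi.sub_apply]
  abel

lemma D_congr (m : ℕ) (H : Subgroup G) (u₁ u₂ : (Fin (m + 1) → G) → (G →₀ A))
    (h : ∀ t : Fin (m + 1) → G, (∀ i, t i ∈ H) → u₁ t = u₂ t)
    (g : Fin (m + 2) → G) (hg : ∀ i, g i ∈ H) :
    D G A (m + 1) u₁ g = D G A (m + 1) u₂ g := by
  rw [D_apply, D_apply]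
  congr 1
  · rw [h (fun i => g i.succ) (fun i => hg i.succ)]
  · refine Finset.sum_congr rfl fun j _ => ?_
    rw [h (Fin.contractNth j (· * ·) g) (contractNth_mem (m + 1) H j g hg)]

end Stmt11Aux

/-- If `G` is a countably infinite locally finite group and `A` is an abelian
group (with trivial `G`-action), then `Hⁿ(G, AG) = 0` for all `n ≥ 2`, where
`AG = ℤG ⊗_ℤ A` is the induced module. -/
theorem stmt11 (G : Type) [Group G] [Countable G] [Infinite G]
    (hlf : ∀ S : Finset G, Finite (Subgroup.closure (S : Set G)))
    (A : Type) [AddCommGroup A] (n : ℕ) (hn : 2 ≤ n) :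
    Subsingleton (groupCohomology (Rep.of (indRep G A)) n) := by
  classical
  open Stmt11Aux groupCohomology in
  obtain ⟨m, rfl⟩ : ∃ m, n = m + 2 := ⟨n - 2, by omega⟩
  -- the exhausting chain of finite subgroups
  obtain ⟨e, he⟩ := exists_surjective_nat G
  set Hs : ℕ → Subgroup G :=
    fun k => Subgroup.closure (((Finset.range (k + 1)).image e : Finset G) : Set G) with hHs
  have hfin : ∀ k, Finite (Hs k) := fun k => hlf _
  have hmono : ∀ {k l}, k ≤ l → Hs k ≤ Hs l := by
    intro k l hkl
    apply Subgroup.closure_mono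
    intro y hy
    simp only [Finset.coe_image, Finset.coe_range, Set.mem_image, Set.mem_Iio] at hy ⊢
    obtain ⟨j, hj, rfl⟩ := hy
    exact ⟨j, by omega, rfl⟩
  have hmem : ∀ x : G, ∃ k, x ∈ Hs k := by
    intro x
    obtain ⟨j, rfl⟩ := he x
    refine ⟨j, Subgroup.subset_closure ?_⟩
    simp only [Finset.coe_image, Finset.coe_range, Set.mem_image, Set.mem_Iio]
    exact ⟨j, by omega, rfl⟩
  have htup : ∀ (l : ℕ) (g : Fin l → G), ∃ k, ∀ i, g i ∈ Hs k := by
    intro l g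
    choose c hc using fun i => hmem (g i)
    exact ⟨Finset.univ.sup c, fun i => hmono (Finset.le_sup (Finset.mem_univ i)) (hc i)⟩
  -- exactness of the inhomogeneous cochain complex at m + 2
  have hex : (inhomogeneousCochains (Rep.of (indRep G A))).ExactAt (m + 2) := by
    rw [HomologicalComplex.exactAt_iff' _ (m + 1) (m + 2) (m + 3)
      (CochainComplex.prev_nat_succ (m + 1)) (CochainComplex.next ℕ (m + 2))]
    rw [CategoryTheory.ShortComplex.moduleCat_exact_iff]
    intro f hf
    set x : (Fin (m + 2) → G) → (G →₀ A) := f with hx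
    have hf' : D G A (m + 2) x = 0 := by
      show (inhomogeneousCochains.d (Rep.of (indRep G A)) (m + 2)).hom x = 0
      rw [← inhomogeneousCochains.d_def]
      exact hf
    -- the glued primitive
    set u : (Fin (m + 1) → G) → (G →₀ A) :=
      fun g => useq Hs hfin m x (htup (m + 1) g).choose g with hu
    have hchain : ∀ k l, k ≤ l → ∀ g : Fin (m + 1) → G, (∀ i, g i ∈ Hs k) →
        useq Hs hfin m x l g = useq Hs hfin m x k g := by
      intro k l hkl
      induction l, hkl using Nat.le_induction with
      | base => intro g hg; rfl
      | succ l hkl ih =>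
          intro g hg
          rw [useq_spec2 Hs hfin (fun j => hmono (Nat.le_succ j)) m x hf' l g
            (fun i => hmono hkl (hg i))]
          exact ih g hg
    have hagree : ∀ k (g : Fin (m + 1) → G), (∀ i, g i ∈ Hs k) →
        u g = useq Hs hfin m x k g := by
      intro k g hg
      have h1 := hchain k (max k (htup (m + 1) g).choose) (le_max_left _ _) g hg
      have h2 := hchain (htup (m + 1) g).choose (max k (htup (m + 1) g).choose)
        (le_max_right _ _) g (htup (m + 1) g).choose_spec
      show useq Hs hfin m x (htup (m + 1) g).choose g = useq Hs hfin m x k g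
      exact h2.symm.trans h1
    refine ⟨u, ?_⟩
    show (inhomogeneousCochains (Rep.of (indRep G A))).d (m + 1) (m + 2) u = x
    rw [inhomogeneousCochains.d_def]
    show D G A (m + 1) u = x
    funext g
    obtain ⟨k, hk⟩ := htup (m + 2) g
    rw [D_congr m (Hs k) u (useq Hs hfin m x k) (fun t ht => hagree k t ht) g hk]
    exact useq_spec1 Hs hfin m x hf' k g hk
  have hz : CategoryTheory.Limits.IsZero (groupCohomology (Rep.of (indRep G A)) (m + 2)) :=
    (HomologicalComplex.exactAt_iff_isZero_homology _ _).1 hex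
  have hid : (CategoryTheory.CategoryStruct.id (groupCohomology (Rep.of (indRep G A)) (m + 2)))
      = 0 := hz.eq_of_src _ _
  refine ⟨fun a b => ?_⟩
  have hval : ∀ z : groupCohomology (Rep.of (indRep G A)) (m + 2), z = 0 := by
    intro z
    calc z = (CategoryTheory.CategoryStruct.id
          (groupCohomology (Rep.of (indRep G A)) (m + 2))) z := rfl
      _ = (0 : groupCohomology (Rep.of (indRep G A)) (m + 2) ⟶ _) z := by rw [hid]
      _ = 0 := rfl
  rw [hval a, hval b]
end

section
/- There exists a partition of the set of limit ordinals below ω₁ into ℵ₁ pairwise disjoint subsets, each of which is stationary in ω₁. -/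
open Ordinal

/-- `S` is a closed unbounded subset (club) of the ordinals below `κ`. -/
def IsClubBelow (κ : Ordinal) (S : Set Ordinal) : Prop :=
  (∀ o ∈ S, o < κ) ∧ (∀ a < κ, ∃ b ∈ S, a ≤ b) ∧
    (∀ T ⊆ S, T.Nonempty → sSup T < κ → sSup T ∈ S)

/-- `S` is stationary below `κ`: it meets every club below `κ`. -/
def IsStationaryBelow (κ : Ordinal) (S : Set Ordinal) : Prop :=
  ∀ C : Set Ordinal, IsClubBelow κ C → (S ∩ C).Nonempty

section SolovayAux

open Cardinal Set

universe u

private lemma lt_aleph_one_iff {c : Cardinal.{u}} : c < aleph 1 ↔ c ≤ ℵ₀ := by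
  have h1 : (1 : Ordinal) = Order.succ 0 := by
    rw [← Ordinal.add_one_eq_succ, zero_add]
  rw [h1, aleph_succ, Order.lt_succ_iff, aleph_zero]

private lemma kappa_isLimit : Order.IsSuccLimit ((aleph 1).ord : Ordinal.{u}) :=
  Cardinal.isSuccLimit_ord (aleph0_le_aleph 1)

private lemma mk_Iio_kappa : #(Set.Iio ((aleph 1).ord : Ordinal.{u})) = aleph 1 := by
  rw [Ordinal.mk_Iio_ordinal, Cardinal.card_ord, Cardinal.lift_aleph, Ordinal.lift_one]

/-- countable intersections of clubs below ω₁ are club -/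
private lemma club_iInter (C : ℕ → Set Ordinal.{u})
    (h : ∀ n, IsClubBelow (aleph 1).ord (C n)) :
    IsClubBelow (aleph 1).ord (⋂ n, C n) := by
  have hκl := kappa_isLimit.{u}
  refine ⟨fun o ho => (h 0).1 o (Set.mem_iInter.1 ho 0), ?_, ?_⟩
  swap
  · intro T hTsub hTne hTs
    exact Set.mem_iInter.2 fun n =>
      (h n).2.2 T (fun x hx => Set.mem_iInter.1 (hTsub hx) n) hTne hTs
  intro a ha
  have hch : ∀ (n : ℕ) (x : Ordinal), x < (aleph 1).ord → ∃ b, b ∈ C n ∧ x ≤ b := by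
    intro n x hx
    obtain ⟨b, h1, h2⟩ := (h n).2.1 x hx
    exact ⟨b, h1, h2⟩
  choose u hu1 hu2 using hch
  let step : ℕ → {x : Ordinal // x < (aleph 1).ord} → {x : Ordinal // x < (aleph 1).ord} :=
    fun k p =>
      ⟨u (Nat.unpair k).1 (p.1 + 1)
          (by rw [Ordinal.add_one_eq_succ]; exact hκl.succ_lt p.2),
        (h (Nat.unpair k).1).1 _ (hu1 _ _ _)⟩
  let f : ℕ → {x : Ordinal // x < (aleph 1).ord} := fun k => Nat.rec ⟨a, ha⟩ step k
  have hmem : ∀ k : ℕ, (f (k + 1)).1 ∈ C (Nat.unpair k).1 := fun k => hu1 _ _ _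
  have hstep : ∀ k : ℕ, (f k).1 + 1 ≤ (f (k + 1)).1 := fun k => hu2 _ _ _
  have hlt1 : ∀ x : Ordinal, x < x + 1 := fun x => by
    rw [Ordinal.add_one_eq_succ]; exact Order.lt_succ _
  have hmono : StrictMono fun k => (f k).1 :=
    strictMono_nat_of_lt_succ fun k => lt_of_lt_of_le (hlt1 _) (hstep k)
  set g : ℕ → Ordinal := fun k => (f (k + 1)).1 with hg
  have hbdd : BddAbove (Set.range g) := by
    refine ⟨(aleph 1).ord, ?_⟩
    rintro x ⟨k, rfl⟩
    exact ((f (k + 1)).2).le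
  set s : Ordinal := ⨆ k, g k with hs
  have hslt : s < (aleph 1).ord := by
    refine Cardinal.iSup_lt_ord_lift_of_isRegular isRegular_aleph_one ?_ fun i => (f (i + 1)).2
    rw [Cardinal.mk_nat, Cardinal.lift_aleph0]
    exact aleph0_lt_aleph_one
  have hgs : ∀ k, g k ≤ s := fun k => le_ciSup hbdd k
  have hsmem : ∀ n : ℕ, s ∈ C n := by
    intro n
    set T : Set Ordinal := g '' {k | (Nat.unpair k).1 = n} with hT
    have hTsub : T ⊆ C n := by
      rintro x ⟨k, hk, rfl⟩
      have := hmem k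
      rwa [hk] at this
    have hTne : T.Nonempty := ⟨g (Nat.pair n 0), ⟨Nat.pair n 0, by simp, rfl⟩⟩
    have hTbdd : BddAbove T := hbdd.mono (Set.image_subset_range _ _)
    have hTs : sSup T = s := by
      apply le_antisymm
      · refine csSup_le hTne ?_
        rintro x ⟨k, _, rfl⟩
        exact hgs k
      · refine ciSup_le fun k => ?_
        have h1 : k + 1 ≤ Nat.pair n (k + 1) := Nat.right_le_pair n (k + 1)
        have h2 : g k ≤ g (Nat.pair n (k + 1)) := by
          show (f (k + 1)).1 ≤ (f (Nat.pair n (k + 1) + 1)).1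
          exact hmono.monotone (h1.trans (Nat.le_succ _))
        refine h2.trans (le_csSup hTbdd ?_)
        exact ⟨Nat.pair n (k + 1), by simp, rfl⟩
    have := (h n).2.2 T hTsub hTne (by rw [hTs]; exact hslt)
    rwa [hTs] at this
  refine ⟨s, Set.mem_iInter.2 hsmem, ?_⟩
  calc a ≤ a + 1 := (hlt1 a).le
    _ ≤ g 0 := hstep 0
    _ ≤ s := hgs 0

/-- the set of limit ordinals below ω₁ is a club -/
private lemma limits_isClub :
    IsClubBelow (aleph 1).ord {o : Ordinal.{u} | o < (aleph 1).ord ∧ Order.IsSuccLimit o} := by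
  refine ⟨fun o ho => ho.1, ?_, ?_⟩
  · intro a ha
    refine ⟨a + ω, ⟨?_, Ordinal.isSuccLimit_add a Ordinal.isSuccLimit_omega0⟩, le_self_add⟩
    rw [Cardinal.lt_ord, Ordinal.card_add, Ordinal.card_omega0, _root_.lt_aleph_one_iff]
    have h1 : a.card ≤ ℵ₀ := _root_.lt_aleph_one_iff.1 (Cardinal.lt_ord.1 ha)
    calc a.card + ℵ₀ ≤ ℵ₀ + ℵ₀ := add_le_add h1 le_rfl
      _ = ℵ₀ := Cardinal.aleph0_add_aleph0
  · intro T hTsub hTne hTs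
    refine ⟨hTs, ?_⟩
    rw [Ordinal.isSuccLimit_iff, Order.isSuccPrelimit_iff_succ_lt]
    refine ⟨?_, ?_⟩
    · obtain ⟨t, ht⟩ := hTne
      have hbdd : BddAbove T := ⟨(aleph 1).ord, fun x hx => ((hTsub hx).1).le⟩
      have h0 : 0 < sSup T := lt_of_lt_of_le (hTsub ht).2.pos (le_csSup hbdd ht)
      exact h0.ne'
    · intro b hb
      obtain ⟨t, ht, hbt⟩ := exists_lt_of_lt_csSup hTne hb
      have hbdd : BddAbove T := ⟨(aleph 1).ord, fun x hx => ((hTsub hx).1).le⟩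
      exact lt_of_lt_of_le ((hTsub ht).2.succ_lt hbt) (le_csSup hbdd ht)

end SolovayAux

section Main

open Cardinal Set

universe u

private lemma stationary_mono {S T : Set Ordinal.{u}} {κ : Ordinal}
    (h : IsStationaryBelow κ S) (hsub : S ⊆ T) : IsStationaryBelow κ T := by
  intro C hC
  obtain ⟨x, hx1, hx2⟩ := h C hC
  exact ⟨x, hsub hx1, hx2⟩

theorem stmt15' :
    ∃ P : Set (Set Ordinal.{u}),
      Cardinal.mk P = Cardinal.aleph 1 ∧
      (∀ S ∈ P, ∀ T ∈ P, S ≠ T → Disjoint S T) ∧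
      ⋃₀ P = {o : Ordinal | o < (Cardinal.aleph 1).ord ∧ Order.IsSuccLimit o} ∧
      ∀ S ∈ P, IsStationaryBelow (Cardinal.aleph 1).ord S := by
  classical
  set κ : Ordinal.{u} := (aleph 1).ord with hκdef
  set L : Set Ordinal.{u} := {o : Ordinal | o < κ ∧ Order.IsSuccLimit o} with hLdef
  -- injections from initial segments into ℕ
  have hemb : ∀ α : Ordinal.{u}, ∃ g : Ordinal → ℕ, α < κ → Set.InjOn g (Set.Iio α) := by
    intro α
    by_cases hα : α < κ
    · have h1 : #(Set.Iio α) ≤ #(ULift.{u+1} ℕ) := by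
        rw [Cardinal.mk_uLift, Cardinal.mk_nat, Cardinal.lift_aleph0, Ordinal.mk_Iio_ordinal]
        have : α.card ≤ ℵ₀ := _root_.lt_aleph_one_iff.1 (Cardinal.lt_ord.1 hα)
        calc Cardinal.lift.{u+1} α.card ≤ Cardinal.lift.{u+1} ℵ₀ := Cardinal.lift_le.2 this
          _ = ℵ₀ := Cardinal.lift_aleph0
      obtain ⟨e⟩ := Cardinal.le_def _ _ |>.1 h1
      refine ⟨fun x => if h : x < α then (e ⟨x, h⟩).down else 0, fun _ => ?_⟩
      intro x hx y hy hxy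
      rw [Set.mem_Iio] at hx hy
      dsimp only at hxy
      rw [dif_pos hx, dif_pos hy] at hxy
      have : e ⟨x, hx⟩ = e ⟨y, hy⟩ := ULift.down_injective hxy
      exact congrArg Subtype.val (e.injective this)
    · exact ⟨fun _ => 0, fun h => absurd h hα⟩
  choose F hF using hemb
  -- the Ulam matrix
  set A : ℕ → Ordinal → Set Ordinal.{u} :=
    fun n β => {α | α ∈ L ∧ β < α ∧ F α β = n} with hAdef
  -- in each column, some entry is stationary
  have hstat : ∀ β : Ordinal.{u}, β < κ → ∃ n, IsStationaryBelow κ (A n β) := by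
    intro β hβ
    by_contra hcon
    push_neg at hcon
    have hC : ∀ n, ∃ C, IsClubBelow κ C ∧ A n β ∩ C = ∅ := by
      intro n
      have h1 := hcon n
      unfold IsStationaryBelow at h1
      push_neg at h1
      obtain ⟨C, hC1, hC2⟩ := h1
      exact ⟨C, hC1, hC2⟩
    choose C hC1 hC2 using hC
    set D : ℕ → Set Ordinal.{u} := fun n => Nat.casesOn n L C with hDdef
    have hD : ∀ n, IsClubBelow κ (D n) := by
      intro n
      cases n with
      | zero => exact limits_isClub
      | succ m => exact hC1 m
    have hβ1 : β + 1 < κ := by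
      rw [Ordinal.add_one_eq_succ]; exact kappa_isLimit.succ_lt hβ
    obtain ⟨b, hbmem, hble⟩ := (club_iInter D hD).2.1 (β + 1) hβ1
    have hbL : b ∈ L := Set.mem_iInter.1 hbmem 0
    have hbβ : β < b := by
      have : β < β + 1 := by rw [Ordinal.add_one_eq_succ]; exact Order.lt_succ _
      exact lt_of_lt_of_le this hble
    have hbA : b ∈ A (F b β) β := ⟨hbL, hbβ, rfl⟩
    have hbC : b ∈ C (F b β) := Set.mem_iInter.1 hbmem (F b β + 1)
    have : b ∈ A (F b β) β ∩ C (F b β) := ⟨hbA, hbC⟩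
    rw [hC2 (F b β)] at this
    exact this
  -- choose the stationary row index for each column
  have hstat' : ∀ β : Ordinal.{u}, ∃ n, β < κ → IsStationaryBelow κ (A n β) := by
    intro β
    by_cases h : β < κ
    · obtain ⟨n, hn⟩ := hstat β h
      exact ⟨n, fun _ => hn⟩
    · exact ⟨0, fun hh => absurd hh h⟩
  choose nb hnb using hstat'
  -- pigeonhole: some row index is used uncountably often
  set Fib : ℕ → Set Ordinal.{u} := fun n => {β | β < κ ∧ nb β = n} with hFibdef
  have hIio : #(Set.Iio κ) = aleph 1 := mk_Iio_kappa
  have hbig : ∃ n, ¬ (Fib n).Countable := by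
    by_contra hall
    push_neg at hall
    have hcover : Set.Iio κ ⊆ ⋃ n, Fib n := by
      intro x hx
      exact Set.mem_iUnion.2 ⟨nb x, hx, rfl⟩
    have h1 : (Set.Iio κ : Set Ordinal).Countable :=
      Set.Countable.mono hcover (Set.countable_iUnion hall)
    have h2 := (Cardinal.countable_iff_lt_aleph_one _).1 h1
    rw [hIio] at h2
    exact lt_irrefl _ h2
  obtain ⟨n₀, hn₀⟩ := hbig
  have hF1sub : Fib n₀ ⊆ Set.Iio κ := fun β hβ => hβ.1
  have hF1card : #(Fib n₀) = aleph 1 := by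
    refine le_antisymm ((Cardinal.mk_le_mk_of_subset hF1sub).trans_eq hIio) ?_
    by_contra hlt
    push_neg at hlt
    exact hn₀ ((Cardinal.countable_iff_lt_aleph_one _).2 hlt)
  set S : Ordinal → Set Ordinal.{u} := A n₀ with hSdef
  have hSstat : ∀ β ∈ Fib n₀, IsStationaryBelow κ (S β) := by
    intro β hβ
    have := hnb β hβ.1
    rwa [hβ.2] at this
  have hSsub : ∀ β, S β ⊆ L := fun β x hx => hx.1
  -- pairwise disjointness of the columns in row n₀
  have hdisj : ∀ β γ : Ordinal.{u}, β ≠ γ → Disjoint (S β) (S γ) := by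
    intro β γ hne
    rw [Set.disjoint_left]
    intro α hαβ hαγ
    exact hne (hF α hαβ.1.1 hαβ.2.1 hαγ.2.1 (hαβ.2.2.trans hαγ.2.2.symm))
  have hSne : ∀ β ∈ Fib n₀, (S β).Nonempty := by
    intro β hβ
    obtain ⟨x, hx, _⟩ := hSstat β hβ L limits_isClub
    exact ⟨x, hx⟩
  -- pick a distinguished column
  have hF1ne : (Fib n₀).Nonempty := by
    rw [Set.nonempty_iff_ne_empty]
    intro h
    rw [h, Cardinal.mk_emptyCollection] at hF1card
    exact absurd hF1card.symm
      (ne_of_gt (lt_of_le_of_lt (Cardinal.zero_le ℵ₀) aleph0_lt_aleph_one))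
  obtain ⟨β₀, hβ₀⟩ := hF1ne
  set F2 : Set Ordinal.{u} := Fib n₀ \ {β₀} with hF2def
  set U : Set Ordinal.{u} := ⋃ β ∈ F2, S β with hUdef
  set R : Set Ordinal.{u} := L \ U with hRdef
  set P : Set (Set Ordinal.{u}) := insert R (S '' F2) with hPdef
  have hSβU : ∀ β ∈ F2, S β ⊆ U := fun β hβ => Set.subset_biUnion_of_mem hβ
  have hRstat : IsStationaryBelow κ R := by
    refine stationary_mono (hSstat β₀ hβ₀) ?_
    intro x hx
    refine ⟨hSsub β₀ hx, ?_⟩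
    intro hxU
    obtain ⟨β, hβ, hxβ⟩ := Set.mem_iUnion₂.1 hxU
    exact Set.disjoint_left.1 (hdisj β₀ β fun h => hβ.2 h.symm) hx hxβ
  have hF2card : #F2 = aleph 1 := by
    refine le_antisymm
      ((Cardinal.mk_le_mk_of_subset (Set.diff_subset.trans hF1sub)).trans_eq hIio) ?_
    by_contra hlt
    push_neg at hlt
    have h1 : F2.Countable := (Cardinal.countable_iff_lt_aleph_one _).2 hlt
    have h2 : (Fib n₀).Countable := by
      have : Fib n₀ ⊆ F2 ∪ {β₀} := by
        intro x hx
        by_cases hxβ : x = β₀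
        · exact Or.inr (by simp [hxβ])
        · exact Or.inl ⟨hx, hxβ⟩
      exact Set.Countable.mono this (h1.union (Set.countable_singleton β₀))
    exact hn₀ h2
  have hinjS : Set.InjOn S F2 := by
    intro β hβ γ hγ he
    by_contra hne
    have hd := hdisj β γ hne
    rw [he] at hd
    obtain ⟨x, hx⟩ := hSne γ hγ.1
    exact Set.disjoint_left.1 hd hx hx
  refine ⟨P, ?_, ?_, ?_, ?_⟩
  · -- cardinality
    have himg : #(S '' F2) = aleph 1 := by
      rw [Cardinal.mk_image_eq_of_injOn S F2 hinjS]; exact hF2card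
    refine le_antisymm ?_ ?_
    · calc #P ≤ #(S '' F2) + 1 := Cardinal.mk_insert_le
        _ = aleph 1 + 1 := by rw [himg]
        _ = aleph 1 := Cardinal.add_one_eq (aleph0_le_aleph 1)
    · rw [← himg]
      exact Cardinal.mk_le_mk_of_subset (Set.subset_insert _ _)
  · -- pairwise disjoint
    intro X hX Y hY hne
    rcases hX with rfl | ⟨β, hβ, rfl⟩ <;> rcases hY with rfl | ⟨γ, hγ, rfl⟩
    · exact absurd rfl hne
    · rw [Set.disjoint_left]
      intro x hx hxγ
      exact hx.2 (hSβU γ hγ hxγ)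
    · rw [Set.disjoint_right]
      intro x hx hxβ
      exact hx.2 (hSβU β hβ hxβ)
    · refine hdisj β γ fun h => hne ?_
      rw [h]
  · -- the union
    apply Set.eq_of_subset_of_subset
    · intro x hx
      obtain ⟨t, ht, hxt⟩ := hx
      rcases ht with rfl | ⟨β, hβ, rfl⟩
      · exact hxt.1
      · exact hSsub β hxt
    · intro x hx
      by_cases hxU : x ∈ U
      · obtain ⟨β, hβ, hxβ⟩ := Set.mem_iUnion₂.1 hxU
        exact ⟨S β, Or.inr ⟨β, hβ, rfl⟩, hxβ⟩
      · exact ⟨R, Or.inl rfl, hx, hxU⟩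
  · -- stationarity
    intro X hX
    rcases hX with rfl | ⟨β, hβ, rfl⟩
    · exact hRstat
    · exact hSstat β hβ.1

end Main

/-- The set of limit ordinals below `ω₁` can be partitioned into `ℵ₁` pairwise
disjoint subsets, each of which is stationary in `ω₁` (Solovay splitting). -/
theorem stmt15 :
    ∃ P : Set (Set Ordinal),
      Cardinal.mk P = Cardinal.aleph 1 ∧
      (∀ S ∈ P, ∀ T ∈ P, S ≠ T → Disjoint S T) ∧
      ⋃₀ P = {o : Ordinal | o < (Cardinal.aleph 1).ord ∧ Order.IsSuccLimit o} ∧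
      ∀ S ∈ P, IsStationaryBelow (Cardinal.aleph 1).ord S := by
  exact stmt15'
end
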